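/- Let a,b ∈ ℝ and let W ⊂ ℝ⁴ be the plane spanned by u₁ = (sin a, 0, cos a, 0) and u₂ = (0, sin b, 0, cos b), the tangent plane of the immersion x(u,v) = (u sin a, v sin b, u cos a, v cos b). With J given by the matrix swapping coordinates 1↔2 and 3↔4, and g = diag(1,-1,1,-1), the tangential part P of J on W satisfies P² = cos²(a-b)·Id on W. -/
import Mathlib

def J4 (v : Fin 4 → ℝ) : Fin 4 → ℝ := ![v 1, v 0, v 3, v 2]

def g4 (v w : Fin 4 → ℝ) : ℝ := v 0 * w 0 - v 1 * w 1 + v 2 * w 2 - v 3 * w 3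

theorem stmt_9 (a b : ℝ) (W : Submodule ℝ (Fin 4 → ℝ))
    (hW : W = Submodule.span ℝ
      {![Real.sin a, 0, Real.cos a, 0], ![0, Real.sin b, 0, Real.cos b]})
    (P : (Fin 4 → ℝ) → (Fin 4 → ℝ))
    (hPW : ∀ u ∈ W, P u ∈ W)
    (horth : ∀ u ∈ W, ∀ w ∈ W, g4 (J4 u - P u) w = 0) :
    ∀ u ∈ W, P (P u) = (Real.cos (a - b)) ^ 2 • u := by
  set u₁ : Fin 4 → ℝ := ![Real.sin a, 0, Real.cos a, 0] with hu₁
  set u₂ : Fin 4 → ℝ := ![0, Real.sin b, 0, Real.cos b] with hu₂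
  set c := Real.cos (a - b) with hc
  have hu₁W : u₁ ∈ W := by rw [hW]; exact Submodule.subset_span (by left; rfl)
  have hu₂W : u₂ ∈ W := by rw [hW]; exact Submodule.subset_span (by right; rfl)
  have hmem : ∀ v ∈ W, ∃ s t : ℝ, v = s • u₁ + t • u₂ := by
    intro v hv
    rw [hW] at hv
    obtain ⟨s, t, h⟩ := Submodule.mem_span_pair.1 hv
    exact ⟨s, t, h.symm⟩
  have gsub : ∀ x y w : Fin 4 → ℝ, g4 (x - y) w = g4 x w - g4 y w := by
    intro x y w; simp [g4]; ring
  have glin : ∀ (s t : ℝ) (x y w : Fin 4 → ℝ),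
      g4 (s • x + t • y) w = s * g4 x w + t * g4 y w := by
    intro s t x y w; simp [g4]; ring
  have Jlin : ∀ (s t : ℝ) (x y : Fin 4 → ℝ),
      J4 (s • x + t • y) = s • J4 x + t • J4 y := by
    intro s t x y
    funext i
    fin_cases i <;> simp [J4]
  have g11 : g4 u₁ u₁ = 1 := by
    simp [g4, hu₁]; nlinarith [Real.sin_sq_add_cos_sq a]
  have g12 : g4 u₁ u₂ = 0 := by simp [g4, hu₁, hu₂]
  have g21 : g4 u₂ u₁ = 0 := by simp [g4, hu₁, hu₂]
  have g22 : g4 u₂ u₂ = -1 := by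
    simp [g4, hu₂]; nlinarith [Real.sin_sq_add_cos_sq b]
  have gJ11 : g4 (J4 u₁) u₁ = 0 := by simp [g4, J4, hu₁]
  have gJ12 : g4 (J4 u₁) u₂ = -c := by
    simp [g4, J4, hu₁, hu₂, hc, Real.cos_sub]; ring
  have gJ21 : g4 (J4 u₂) u₁ = c := by
    simp [g4, J4, hu₁, hu₂, hc, Real.cos_sub]; ring
  have gJ22 : g4 (J4 u₂) u₂ = 0 := by simp [g4, J4, hu₂]
  have hzero : ∀ w ∈ W, g4 w u₁ = 0 → g4 w u₂ = 0 → w = 0 := by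
    intro w hw h1 h2
    obtain ⟨s, t, rfl⟩ := hmem w hw
    rw [glin, g11, g21] at h1
    rw [glin, g12, g22] at h2
    have hs : s = 0 := by linarith
    have ht : t = 0 := by linarith
    simp [hs, ht]
  have key : ∀ s t : ℝ, P (s • u₁ + t • u₂) = (c * t) • u₁ + (c * s) • u₂ := by
    intro s t
    have huW : s • u₁ + t • u₂ ∈ W :=
      W.add_mem (W.smul_mem s hu₁W) (W.smul_mem t hu₂W)
    have hqW : (c * t) • u₁ + (c * s) • u₂ ∈ W :=
      W.add_mem (W.smul_mem _ hu₁W) (W.smul_mem _ hu₂W)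
    have hdW : P (s • u₁ + t • u₂) - ((c * t) • u₁ + (c * s) • u₂) ∈ W :=
      W.sub_mem (hPW _ huW) hqW
    have hP1 : g4 (P (s • u₁ + t • u₂)) u₁ = c * t := by
      have := horth _ huW u₁ hu₁W
      rw [gsub, Jlin, glin, gJ11, gJ21] at this
      linarith
    have hP2 : g4 (P (s • u₁ + t • u₂)) u₂ = -(c * s) := by
      have := horth _ huW u₂ hu₂W
      rw [gsub, Jlin, glin, gJ12, gJ22] at this
      linarith
    have h1 : g4 (P (s • u₁ + t • u₂) - ((c * t) • u₁ + (c * s) • u₂)) u₁ = 0 := by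
      rw [gsub, glin, g11, g21, hP1]; ring
    have h2 : g4 (P (s • u₁ + t • u₂) - ((c * t) • u₁ + (c * s) • u₂)) u₂ = 0 := by
      rw [gsub, glin, g12, g22, hP2]; ring
    have := hzero _ hdW h1 h2
    exact sub_eq_zero.1 this
  intro u hu
  obtain ⟨s, t, rfl⟩ := hmem u hu
  rw [key, key]
  module
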